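/- Let M < N. For every Ω in the Stiefel manifold St(N, M) there exist nonzero vectors v^(1), …, v^(M) ∈ ℝ^N such that Ω = [I; 0] − U S⁻¹ U₁ᵀ, where U ∈ ℝ^{N×M} is the matrix whose l-th column is v^(l)/‖v^(l)‖₂, U₁ is the upper M×M submatrix of U, S = (1/2)I + striu(UᵀU), and [I; 0] denotes the N×M matrix consisting of the M×M identity stacked above an (N−M)×M zero block. That is, the truncated CWY map γ(v^(1),…,v^(M)) = [I; 0] − U S⁻¹ U₁ᵀ is a surjection onto St(N, M). -/

import Mathlib

open scoped BigOperators Matrix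

/-- `striu M` zeroes out all diagonal and lower-triangular entries of `M`. -/
def striu {L : ℕ} (M : Matrix (Fin L) (Fin L) ℝ) : Matrix (Fin L) (Fin L) ℝ :=
  fun i j => if i < j then M i j else 0

/-- The truncated CWY map `γ(v⁽¹⁾, …, v⁽ᴹ⁾) = [I; 0] - U S⁻¹ U₁ᵀ`, where `U` is the `N × M`
matrix with columns `v⁽ˡ⁾/‖v⁽ˡ⁾‖₂`, `U₁` is the upper `M × M` submatrix of `U` and
`S = ½ I + striu(UᵀU)`. -/
noncomputable def tcwy {M N : ℕ} (hMN : M < N) (v : Fin M → Fin N → ℝ) :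
    Matrix (Fin N) (Fin M) ℝ :=
  let U : Matrix (Fin N) (Fin M) ℝ := fun i l => v l i / Real.sqrt (∑ k, v l k ^ 2)
  let U₁ : Matrix (Fin M) (Fin M) ℝ := fun i l => U (Fin.castLE hMN.le i) l
  let S : Matrix (Fin M) (Fin M) ℝ := (1 / 2 : ℝ) • (1 : Matrix (Fin M) (Fin M) ℝ)
    + striu (Uᵀ * U)
  let incl : Matrix (Fin N) (Fin M) ℝ := fun i j => if (i : ℕ) = (j : ℕ) then 1 else 0
  incl - U * S⁻¹ * U₁ᵀ

namespace TCWY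

variable {M N : ℕ}

variable {M N : ℕ}

noncomputable def hh (w : Fin N → ℝ) : Matrix (Fin N) (Fin N) ℝ :=
  1 - (2:ℝ) • Matrix.vecMulVec w w

lemma hh_apply (w : Fin N → ℝ) (i j : Fin N) :
    hh w i j = (if i = j then 1 else 0) - 2 * (w i * w j) := by
  simp [hh, Matrix.one_apply, Matrix.vecMulVec_apply]

lemma sum_ite_val {n : ℕ} (m : ℕ) (hm : m < n) (f : Fin n → ℝ) :
    ∑ i : Fin n, (if (i:ℕ) = m then 1 else 0) * f i = f ⟨m, hm⟩ := by
  have h : ∀ i : Fin n, ((i:ℕ) = m) = (i = ⟨m, hm⟩) := by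
    intro i; simp [Fin.ext_iff]
  simp [h, ite_mul, Finset.sum_ite_eq']

lemma hh_mul_apply (w : Fin N → ℝ) (Ψ : Matrix (Fin N) (Fin M) ℝ) (i : Fin N) (j : Fin M) :
    (hh w * Ψ) i j = Ψ i j - 2 * w i * (∑ p, w p * Ψ p j) := by
  simp only [Matrix.mul_apply, hh_apply, sub_mul, ite_mul, one_mul, zero_mul,
    Finset.sum_sub_distrib, Finset.sum_ite_eq, Finset.mem_univ, if_true]
  congr 1
  rw [Finset.mul_sum]
  exact Finset.sum_congr rfl fun p _ => by ring



noncomputable def PH (u : ℕ → Fin N → ℝ) : ℕ → Matrix (Fin N) (Fin N) ℝ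
  | 0 => 1
  | (k+1) => PH u k * hh (u k)

lemma PH_congr (u u' : ℕ → Fin N → ℝ) (k : ℕ) (h : ∀ l < k, u l = u' l) :
    PH u k = PH u' k := by
  induction k with
  | zero => rfl
  | succ k ih =>
      rw [PH, PH, ih (fun l hl => h l (Nat.lt_succ_of_lt hl)), h k (Nat.lt_succ_self k)]

lemma hh_transpose (w : Fin N → ℝ) : (hh w)ᵀ = hh w := by
  ext i j
  simp [Matrix.transpose_apply, hh_apply, eq_comm]
  ring

lemma hh_mul_self (w : Fin N → ℝ) (hw : ∑ i, w i ^ 2 = 1) : hh w * hh w = 1 := by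
  ext i j
  simp only [Matrix.mul_apply, hh_apply]
  have : ∀ p : Fin N, ((if i = p then (1:ℝ) else 0) - 2 * (w i * w p)) *
      ((if p = j then (1:ℝ) else 0) - 2 * (w p * w j))
      = (if i = p then (1:ℝ) else 0) * (if p = j then (1:ℝ) else 0)
        - 2 * (w i * w p) * (if p = j then (1:ℝ) else 0)
        - (if i = p then (1:ℝ) else 0) * (2 * (w p * w j))
        + 4 * (w i * w j) * w p ^ 2 := by
    intro p; ring
  rw [Finset.sum_congr rfl fun p _ => this p]
  rw [Finset.sum_add_distrib, Finset.sum_sub_distrib, Finset.sum_sub_distrib]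
  rw [← Finset.mul_sum, hw]
  simp [Finset.sum_ite_eq, Finset.sum_ite_eq', Matrix.one_apply, mul_comm, mul_assoc]
  ring

lemma reduce (hMN : M < N) (Ω : Matrix (Fin N) (Fin M) ℝ) (hΩ : Ωᵀ * Ω = 1) :
    ∀ k, k ≤ M → ∃ (u : ℕ → Fin N → ℝ) (Ψ : Matrix (Fin N) (Fin M) ℝ),
      (∀ l, l < k → ∑ i, u l i ^ 2 = 1) ∧ Ψᵀ * Ψ = 1 ∧
      (∀ (j : Fin M) (i : Fin N), (j:ℕ) < k → Ψ i j = if (i:ℕ) = (j:ℕ) then 1 else 0) ∧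
      Ω = PH u k * Ψ := by
  intro k
  induction k with
  | zero =>
      intro _
      exact ⟨fun _ _ => 0, Ω, fun l hl => absurd hl (Nat.not_lt_zero l), hΩ,
        fun j i h => absurd h (Nat.not_lt_zero _), by rw [PH, Matrix.one_mul]⟩
  | succ k ih =>
      intro hk1
      have hk : k < M := hk1
      obtain ⟨u, Ψ, hu, hΨ, hcols, hfac⟩ := ih (le_of_lt hk)
      have hkN : k < N := lt_trans hk hMN
      have hk1N : k + 1 < N := lt_of_le_of_lt hk1 hMN
      set κ : Fin M := ⟨k, hk⟩ with hκdef
      -- column k of Ψ has unit norm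
      have hω1 : ∑ i, Ψ i κ ^ 2 = 1 := by
        have h : (Ψᵀ * Ψ) κ κ = (1 : Matrix (Fin M) (Fin M) ℝ) κ κ := by rw [hΨ]
        simp only [Matrix.mul_apply, Matrix.transpose_apply, Matrix.one_apply_eq] at h
        simpa [pow_two] using h
      -- column k of Ψ vanishes below k
      have hω0 : ∀ i : Fin N, (i:ℕ) < k → Ψ i κ = 0 := by
        intro i hik
        have hiM : (i:ℕ) < M := lt_trans hik hk
        have hjκ : (⟨(i:ℕ), hiM⟩ : Fin M) ≠ κ := by
          simp only [hκdef, ne_eq, Fin.mk.injEq]; omega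
        have h : (Ψᵀ * Ψ) ⟨(i:ℕ), hiM⟩ κ = 0 := by
          rw [hΨ]; simp [Matrix.one_apply, hjκ]
        rw [Matrix.mul_apply] at h
        have hrw : ∀ p : Fin N, Ψᵀ ⟨(i:ℕ), hiM⟩ p * Ψ p κ
            = (if (p:ℕ) = (i:ℕ) then 1 else 0) * Ψ p κ := by
          intro p
          rw [Matrix.transpose_apply, hcols ⟨(i:ℕ), hiM⟩ p hik]
        rw [Finset.sum_congr rfl fun p _ => hrw p, sum_ite_val (i:ℕ) i.isLt] at h
        simpa using h
      -- find the Householder vector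
      have key : ∃ w : Fin N → ℝ, (∑ i, w i ^ 2 = 1) ∧ (∀ p : Fin N, (p:ℕ) < k → w p = 0) ∧
          (∀ i : Fin N, Ψ i κ - 2 * w i * (∑ p, w p * Ψ p κ)
            = (if (i:ℕ) = k then 1 else 0)) := by
        by_cases hcase : (fun i : Fin N => Ψ i κ) = (fun i : Fin N => if (i:ℕ) = k then (1:ℝ) else 0)
        · -- column already e_k : use w = e_{k+1}
          refine ⟨fun i => if (i:ℕ) = k+1 then 1 else 0, ?_, ?_, ?_⟩
          · have h2 : ∀ i : Fin N, (if (i:ℕ) = k+1 then (1:ℝ) else 0) ^ 2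
                = (if (i:ℕ) = k+1 then (1:ℝ) else 0) * (if (i:ℕ) = k+1 then 1 else 0) := by
              intro i; ring
            rw [Finset.sum_congr rfl fun i _ => h2 i,
              sum_ite_val (k+1) hk1N (fun i => if (i:ℕ) = k+1 then (1:ℝ) else 0)]
            simp
          · intro p hp
            have : (p:ℕ) ≠ k+1 := by omega
            simp [this]
          · intro i
            have hs : ∑ p : Fin N, (if (p:ℕ) = k+1 then (1:ℝ) else 0) * Ψ p κ = 0 := by
              rw [sum_ite_val (k+1) hk1N (fun p => Ψ p κ)]
              have := congrFun hcase (⟨k+1, hk1N⟩ : Fin N)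
              simpa using this
            rw [hs]
            have := congrFun hcase i
            simpa using this
        · -- general Householder step
          have hsumeω : ∑ i : Fin N, (if (i:ℕ) = k then (1:ℝ) else 0) * Ψ i κ = Ψ ⟨k, hkN⟩ κ :=
            sum_ite_val k hkN (fun p => Ψ p κ)
          set t : ℝ := ∑ i : Fin N, ((if (i:ℕ) = k then (1:ℝ) else 0) - Ψ i κ) ^ 2 with htdef
          have ht : t = 2 - 2 * Ψ ⟨k, hkN⟩ κ := by
            have expand : ∀ i : Fin N, ((if (i:ℕ) = k then (1:ℝ) else 0) - Ψ i κ) ^ 2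
                = (if (i:ℕ) = k then (1:ℝ) else 0) * (if (i:ℕ) = k then (1:ℝ) else 0)
                  - 2 * ((if (i:ℕ) = k then (1:ℝ) else 0) * Ψ i κ) + Ψ i κ ^ 2 := by
              intro i; ring
            rw [htdef, Finset.sum_congr rfl fun i _ => expand i, Finset.sum_add_distrib,
              Finset.sum_sub_distrib, ← Finset.mul_sum, hsumeω, hω1,
              sum_ite_val k hkN (fun i => if (i:ℕ) = k then (1:ℝ) else 0)]
            simp
            ring
          have htpos : 0 < t := by
            have hex : ∃ i : Fin N, ((if (i:ℕ) = k then (1:ℝ) else 0) - Ψ i κ) ≠ 0 := by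
              by_contra h
              push_neg at h
              apply hcase
              funext i
              have hi := h i
              have : Ψ i κ = (if (i:ℕ) = k then (1:ℝ) else 0) := by linarith [sub_eq_zero.mp hi]
              simpa using this
            obtain ⟨i0, hi0⟩ := hex
            exact Finset.sum_pos' (fun i _ => sq_nonneg _)
              ⟨i0, Finset.mem_univ _, by positivity⟩
          set c := Real.sqrt t with hcdef
          have hc2 : c ^ 2 = t := Real.sq_sqrt htpos.le
          have hc0 : c ≠ 0 := (Real.sqrt_pos.mpr htpos).ne'
          refine ⟨fun i => ((if (i:ℕ) = k then (1:ℝ) else 0) - Ψ i κ) / c, ?_, ?_, ?_⟩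
          · have h2 : ∀ i : Fin N, (((if (i:ℕ) = k then (1:ℝ) else 0) - Ψ i κ) / c) ^ 2
                = ((if (i:ℕ) = k then (1:ℝ) else 0) - Ψ i κ) ^ 2 / c ^ 2 := by
              intro i; rw [div_pow]
            rw [Finset.sum_congr rfl fun i _ => h2 i, ← Finset.sum_div, hc2]
            exact div_self htpos.ne'
          · intro p hp
            have h1 : (p:ℕ) ≠ k := by omega
            have h2 : Ψ p κ = 0 := hω0 p hp
            simp [h1, h2]
          · intro i
            have hs : ∑ p : Fin N, (((if (p:ℕ) = k then (1:ℝ) else 0) - Ψ p κ) / c) * Ψ p κ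
                = (Ψ ⟨k, hkN⟩ κ - 1) / c := by
              have h3 : ∀ p : Fin N, (((if (p:ℕ) = k then (1:ℝ) else 0) - Ψ p κ) / c) * Ψ p κ
                  = ((if (p:ℕ) = k then (1:ℝ) else 0) * Ψ p κ - Ψ p κ ^ 2) / c := by
                intro p; ring
              rw [Finset.sum_congr rfl fun p _ => h3 p, ← Finset.sum_div,
                Finset.sum_sub_distrib, hsumeω, hω1]
            rw [hs]
            have hkey : 2 * (Ψ ⟨k, hkN⟩ κ - 1) = -(c ^ 2) := by rw [hc2, ht]; ring
            have halg : ∀ a b : ℝ, b - 2 * ((a - b) / c) * ((Ψ ⟨k, hkN⟩ κ - 1) / c) = a := by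
              intro a b
              have h1 : 2 * ((a - b) / c) * ((Ψ ⟨k, hkN⟩ κ - 1) / c)
                  = (a - b) * (2 * (Ψ ⟨k, hkN⟩ κ - 1)) / c ^ 2 := by
                field_simp
              rw [h1, hkey]
              field_simp
              ring
            exact halg _ _
      obtain ⟨w, hwu, hw0, hwω⟩ := key
      refine ⟨Function.update u k w, hh w * Ψ, ?_, ?_, ?_, ?_⟩
      · intro l hl
        rcases Nat.lt_or_ge l k with h | h
        · rw [Function.update_of_ne (Nat.ne_of_lt h)]; exact hu l h
        · have : l = k := by omega
          rw [this, Function.update_self]; exact hwu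
      · calc (hh w * Ψ)ᵀ * (hh w * Ψ) = Ψᵀ * (hh w * (hh w * Ψ)) := by
              rw [Matrix.transpose_mul, hh_transpose, Matrix.mul_assoc]
          _ = Ψᵀ * Ψ := by rw [← Matrix.mul_assoc (hh w), hh_mul_self _ hwu, Matrix.one_mul]
          _ = 1 := hΨ
      · intro j i hj
        rw [hh_mul_apply]
        rcases Nat.lt_or_ge (j:ℕ) k with hjk | hjk
        · have hsum : ∑ p, w p * Ψ p j = 0 := by
            have h5 : ∀ p : Fin N, w p * Ψ p j
                = (if (p:ℕ) = (j:ℕ) then 1 else 0) * w p := by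
              intro p; rw [hcols j p hjk]; ring
            rw [Finset.sum_congr rfl fun p _ => h5 p,
              sum_ite_val (j:ℕ) (lt_trans j.isLt hMN) w]
            exact hw0 _ hjk
          rw [hsum, hcols j i hjk]
          ring
        · have hjκ : j = κ := by
            apply Fin.ext
            show (j:ℕ) = k
            omega
          rw [hjκ]
          have := hwω i
          simpa [hκdef] using this
      · have hPH : PH (Function.update u k w) (k+1) = PH u k * hh w := by
          rw [PH, Function.update_self,
            PH_congr (Function.update u k w) u k
              (fun l hl => Function.update_of_ne (Nat.ne_of_lt hl) _ _)]
        rw [hPH, Matrix.mul_assoc, ← Matrix.mul_assoc (hh w), hh_mul_self _ hwu,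
          Matrix.one_mul]
        exact hfac


variable {M N : ℕ}

noncomputable def Smat (C : Matrix (Fin N) (Fin M) ℝ) : Matrix (Fin M) (Fin M) ℝ :=
  (1 / 2 : ℝ) • (1 : Matrix (Fin M) (Fin M) ℝ) + striu (Cᵀ * C)

lemma Smat_apply (C : Matrix (Fin N) (Fin M) ℝ) (a b : Fin M) :
    Smat C a b = (if a = b then (1/2:ℝ) else 0) + (if a < b then (Cᵀ * C) a b else 0) := by
  simp only [Smat, striu, Matrix.add_apply, Matrix.smul_apply, Matrix.one_apply, smul_eq_mul]
  by_cases h : a = b <;> simp [h]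

lemma Smat_tri (C : Matrix (Fin N) (Fin M) ℝ) : (Smat C).BlockTriangular id := by
  intro i j hij
  rw [Smat_apply]
  have h1 : i ≠ j := (ne_of_gt hij)
  have h2 : ¬ i < j := not_lt_of_gt hij
  simp [h1, h2]

lemma Smat_isUnit_det (C : Matrix (Fin N) (Fin M) ℝ) : IsUnit (Smat C).det := by
  rw [Matrix.det_of_upperTriangular (Smat_tri C)]
  have h : ∀ i : Fin M, Smat C i i = 1/2 := fun i => by rw [Smat_apply]; simp
  rw [Finset.prod_congr rfl fun i _ => h i, Finset.prod_const]
  simp [isUnit_iff_ne_zero]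

lemma Sinv_mul (C : Matrix (Fin N) (Fin M) ℝ) : (Smat C)⁻¹ * Smat C = 1 :=
  Matrix.nonsing_inv_mul _ (Smat_isUnit_det C)

lemma Sinv_tri (C : Matrix (Fin N) (Fin M) ℝ) : (Smat C)⁻¹.BlockTriangular id := by
  haveI := (Smat C).invertibleOfIsUnitDet (Smat_isUnit_det C)
  exact Matrix.blockTriangular_inv_of_blockTriangular (Smat_tri C)

lemma Sinv_diag (C : Matrix (Fin N) (Fin M) ℝ) (a : Fin M) : (Smat C)⁻¹ a a = 2 := by
  have h : ((Smat C)⁻¹ * Smat C) a a = 1 := by rw [Sinv_mul]; simp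
  rw [Matrix.mul_apply, Finset.sum_eq_single a] at h
  · rw [Smat_apply] at h; simp at h; linarith
  · intro b _ hb
    rcases lt_or_gt_of_ne hb with hlt | hgt
    · rw [Sinv_tri C hlt, zero_mul]
    · rw [Smat_tri C hgt, mul_zero]
  · intro h; exact absurd (Finset.mem_univ a) h

lemma Sinv_col (C : Matrix (Fin N) (Fin M) ℝ) {k : ℕ} (hk : k < M) (i : Fin M)
    (hi : (i:ℕ) < k) :
    ∑ a : Fin M, (if (a:ℕ) < k then (Smat C)⁻¹ i a * (Cᵀ*C) a ⟨k,hk⟩ else 0)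
      = -(1/2) * (Smat C)⁻¹ i ⟨k, hk⟩ := by
  have hiκ : i ≠ (⟨k, hk⟩ : Fin M) := by simp only [ne_eq, Fin.ext_iff]; omega
  have h : ((Smat C)⁻¹ * Smat C) i ⟨k, hk⟩ = 0 := by
    rw [Sinv_mul]; simp [Matrix.one_apply, hiκ]
  rw [Matrix.mul_apply] at h
  have split : ∀ a : Fin M, (Smat C)⁻¹ i a * Smat C a ⟨k, hk⟩
      = (if a = (⟨k, hk⟩ : Fin M) then (Smat C)⁻¹ i ⟨k, hk⟩ * (1/2) else 0)
        + (if (a:ℕ) < k then (Smat C)⁻¹ i a * (Cᵀ*C) a ⟨k, hk⟩ else 0) := by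
    intro a
    by_cases h1 : a = (⟨k, hk⟩ : Fin M)
    · subst h1
      rw [Smat_apply]
      simp
    · by_cases h2 : (a:ℕ) < k
      · have haκ : a < (⟨k, hk⟩ : Fin M) := by rw [Fin.lt_def]; exact h2
        rw [Smat_apply]
        simp [h1, haκ, h2]
      · have h3 : ¬ a < (⟨k, hk⟩ : Fin M) := by rw [Fin.lt_def]; exact h2
        rw [Smat_apply]
        simp [h1, h3, h2]
  rw [Finset.sum_congr rfl fun a _ => split a, Finset.sum_add_distrib,
    Finset.sum_ite_eq' Finset.univ] at h
  simp only [Finset.mem_univ, if_true] at h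
  linarith





/-- Truncation of `(Smat C)⁻¹` to the leading `k × k` block. -/
noncomputable def Pmat (C : Matrix (Fin N) (Fin M) ℝ) (k : ℕ) : Matrix (Fin M) (Fin M) ℝ :=
  Matrix.of fun i j : Fin M => if (i:ℕ) < k ∧ (j:ℕ) < k then (Smat C)⁻¹ i j else 0

lemma Pstep (C : Matrix (Fin N) (Fin M) ℝ) {k : ℕ} (hk : k < M) :
    Pmat C (k+1) = Pmat C k
      + (2:ℝ) • Matrix.single (⟨k,hk⟩ : Fin M) (⟨k,hk⟩ : Fin M) (1:ℝ)
      - (2:ℝ) • (Pmat C k * (Cᵀ*C)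
          * Matrix.single (⟨k,hk⟩ : Fin M) (⟨k,hk⟩ : Fin M) (1:ℝ)) := by
  set κ : Fin M := ⟨k, hk⟩ with hκdef
  have hκv : (κ:ℕ) = k := rfl
  have hEapply : ∀ a b : Fin M, Matrix.single κ κ (1:ℝ) a b
      = if a = κ ∧ b = κ then 1 else 0 := by
    intro a b
    simp only [Matrix.single, Matrix.of_apply]
    have hiff : (κ = a ∧ κ = b) ↔ (a = κ ∧ b = κ) := by
      constructor <;> rintro ⟨x, y⟩ <;> exact ⟨x.symm, y.symm⟩
    simp [hiff]
  have hGE : ∀ a j : Fin M, ((Cᵀ*C) * Matrix.single κ κ (1:ℝ)) a j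
      = if j = κ then (Cᵀ*C) a κ else 0 := by
    intro a j
    rw [Matrix.mul_apply]
    by_cases hj : j = κ
    · subst hj
      simp [hEapply, mul_ite, Finset.sum_ite_eq']
    · rw [Finset.sum_eq_zero, if_neg hj]
      intro b _
      rw [hEapply]
      simp [hj]
  have hPGE : ∀ i j : Fin M, (Pmat C k * (Cᵀ*C) * Matrix.single κ κ (1:ℝ)) i j
      = if j = κ ∧ (i:ℕ) < k
          then ∑ a : Fin M, (if (a:ℕ) < k then (Smat C)⁻¹ i a * (Cᵀ*C) a κ else 0)
          else 0 := by
    intro i j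
    rw [Matrix.mul_assoc, Matrix.mul_apply]
    simp only [hGE]
    by_cases hj : j = κ
    · simp only [hj, if_pos rfl, true_and]
      by_cases hi : (i:ℕ) < k
      · rw [if_pos hi]
        refine Finset.sum_congr rfl fun a _ => ?_
        by_cases ha : (a:ℕ) < k <;> simp [Pmat, ha, hi]
      · rw [if_neg hi, Finset.sum_eq_zero]
        intro a _
        simp [Pmat, hi]
    · simp [hj]
  ext i j
  rw [Matrix.sub_apply, Matrix.add_apply, Matrix.smul_apply, Matrix.smul_apply, hPGE i j,
    hEapply i j]
  simp only [Pmat, Matrix.of_apply, smul_eq_mul]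
  by_cases hj : j = κ
  · subst hj
    by_cases hi : (i:ℕ) < k
    · rw [Sinv_col C hk i hi]
      have hik : i ≠ κ := by
        rw [hκdef]; simp only [ne_eq, Fin.ext_iff]; omega
      have h1 : (i:ℕ) < k + 1 := by omega
      simp only [hκv, Nat.lt_irrefl, and_false, if_false, Nat.lt_succ_self, h1, hi,
        true_and, and_true, if_true, hik, false_and, if_neg]
      ring
    · by_cases hik : i = κ
      · subst hik
        simp [hκv, Sinv_diag, Nat.lt_succ_self, Nat.lt_irrefl]
      · have hiv : (i:ℕ) ≠ k := by
          intro h; exact hik (Fin.ext (h.trans hκv.symm))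
        have hi1 : ¬ (i:ℕ) < k + 1 := by omega
        simp [hi, hi1, hik, hκv]
  · have hjv : (j:ℕ) ≠ k := by
      intro h; exact hj (Fin.ext (h.trans hκv.symm))
    simp only [hj, and_false, false_and, if_false, mul_zero, add_zero, sub_zero]
    by_cases hjk : (j:ℕ) < k
    · have h1 : (j:ℕ) < k + 1 := by omega
      by_cases hi : (i:ℕ) < k
      · have h2 : (i:ℕ) < k + 1 := by omega
        simp [hi, h2, hjk, h1]
      · by_cases hik : (i:ℕ) = k
        · have h2 : (i:ℕ) < k + 1 := by omega
          have hz : (Smat C)⁻¹ i j = 0 := by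
            apply Sinv_tri
            show (j:ℕ) < (i:ℕ)
            omega
          simp [hi, h2, hjk, h1, hz]
        · have h2 : ¬ (i:ℕ) < k + 1 := by omega
          simp [hi, h2]
    · have h1 : ¬ (j:ℕ) < k + 1 := by omega
      simp [hjk, h1]



lemma stdBasis_diag_apply (κ a b : Fin M) :
    Matrix.single κ κ (1:ℝ) a b = if a = κ ∧ b = κ then 1 else 0 := by
  simp only [Matrix.single, Matrix.of_apply]
  have hiff : (κ = a ∧ κ = b) ↔ (a = κ ∧ b = κ) := by
    constructor <;> rintro ⟨x, y⟩ <;> exact ⟨x.symm, y.symm⟩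
  simp [hiff]

lemma vecMulVec_col (C : Matrix (Fin N) (Fin M) ℝ) (κ : Fin M) :
    Matrix.vecMulVec (fun i => C i κ) (fun i => C i κ)
      = C * Matrix.single κ κ (1:ℝ) * Cᵀ := by
  have hCE : ∀ (i : Fin N) (b : Fin M), (C * Matrix.single κ κ (1:ℝ)) i b
      = if b = κ then C i κ else 0 := by
    intro i b
    rw [Matrix.mul_apply]
    by_cases hb : b = κ
    · subst hb
      simp [stdBasis_diag_apply, mul_ite, Finset.sum_ite_eq']
    · rw [Finset.sum_eq_zero, if_neg hb]
      intro a _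
      rw [stdBasis_diag_apply]
      simp [hb]
  ext i j
  rw [Matrix.vecMulVec_apply, Matrix.mul_apply]
  simp [hCE, ite_mul, Finset.sum_ite_eq']

lemma cwy (C : Matrix (Fin N) (Fin M) ℝ) (u : ℕ → Fin N → ℝ)
    (hu : ∀ (l : ℕ) (h : l < M), u l = fun i => C i ⟨l, h⟩) :
    ∀ k, k ≤ M → PH u k = 1 - C * Pmat C k * Cᵀ := by
  intro k
  induction k with
  | zero =>
      intro _
      have h0 : Pmat C 0 = 0 := by
        ext i j; simp [Pmat]
      rw [PH, h0, Matrix.mul_zero, Matrix.zero_mul, sub_zero]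
  | succ k ih =>
      intro hk1
      have hk : k < M := hk1
      have hw : hh (u k) = 1 - (2:ℝ) • (C * Matrix.single (⟨k,hk⟩ : Fin M)
          (⟨k,hk⟩ : Fin M) (1:ℝ) * Cᵀ) := by
        rw [hh, hu k hk, vecMulVec_col]
      rw [PH, ih (le_of_lt hk), hw, Pstep C hk]
      simp only [Matrix.mul_sub, Matrix.sub_mul, Matrix.mul_add, Matrix.add_mul,
        Matrix.mul_one, Matrix.one_mul, Matrix.mul_smul, Matrix.smul_mul, Matrix.mul_assoc,
        smul_sub, smul_add]
      abel


end TCWY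

/-- Surjectivity of the truncated CWY map onto the Stiefel manifold `St(N, M)` for `M < N`:
every `Ω` with `ΩᵀΩ = I` equals `γ(v⁽¹⁾, …, v⁽ᴹ⁾)` for some nonzero vectors
`v⁽¹⁾, …, v⁽ᴹ⁾ ∈ ℝᴺ`. -/

theorem tcwy_surjective {M N : ℕ} (hMN : M < N)
    (Ω : Matrix (Fin N) (Fin M) ℝ) (hΩ : Ωᵀ * Ω = 1) :
    ∃ v : Fin M → Fin N → ℝ, (∀ l, v l ≠ 0) ∧ Ω = tcwy hMN v := by
  obtain ⟨u, Ψ, hu, hΨ, hcols, hfac⟩ := TCWY.reduce hMN Ω hΩ M le_rfl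
  set C : Matrix (Fin N) (Fin M) ℝ := Matrix.of fun (i : Fin N) (l : Fin M) => u (l:ℕ) i
    with hC
  have huC : ∀ (l : ℕ) (h : l < M), u l = fun i => C i ⟨l, h⟩ := by
    intro l h; funext i; simp [hC]
  have hPH := TCWY.cwy C u huC M le_rfl
  have hPM : TCWY.Pmat C M = (TCWY.Smat C)⁻¹ := by
    ext i j; simp [TCWY.Pmat, i.isLt, j.isLt]
  rw [hPM] at hPH
  refine ⟨fun l => u (l:ℕ), ?_, ?_⟩
  · intro l h0
    have h1 := hu (l:ℕ) l.isLt
    rw [show u (l:ℕ) = 0 from h0] at h1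
    simp at h1
  · have hUv : (Matrix.of fun (i : Fin N) (l : Fin M) =>
        u (l:ℕ) i / Real.sqrt (∑ k, u (l:ℕ) k ^ 2)) = C := by
      funext i l
      show u (l:ℕ) i / Real.sqrt (∑ k, u (l:ℕ) k ^ 2) = C i l
      rw [hu (l:ℕ) l.isLt, Real.sqrt_one, div_one]
      rfl
    have htc : tcwy hMN (fun l => u (l:ℕ))
        = (Matrix.of fun (i : Fin N) (j : Fin M) => if (i:ℕ) = (j:ℕ) then (1:ℝ) else 0)
          - (Matrix.of fun (i : Fin N) (l : Fin M) =>
                u (l:ℕ) i / Real.sqrt (∑ k, u (l:ℕ) k ^ 2))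
            * ((1 / 2 : ℝ) • (1 : Matrix (Fin M) (Fin M) ℝ)
              + striu ((Matrix.of fun (i : Fin N) (l : Fin M) =>
                    u (l:ℕ) i / Real.sqrt (∑ k, u (l:ℕ) k ^ 2))ᵀ
                * (Matrix.of fun (i : Fin N) (l : Fin M) =>
                    u (l:ℕ) i / Real.sqrt (∑ k, u (l:ℕ) k ^ 2))))⁻¹
            * (Matrix.of fun (i : Fin M) (l : Fin M) =>
                (Matrix.of fun (i : Fin N) (l : Fin M) =>
                    u (l:ℕ) i / Real.sqrt (∑ k, u (l:ℕ) k ^ 2))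
                  (Fin.castLE hMN.le i) l)ᵀ := rfl
    rw [htc, hUv]
    have hSm : ((1 / 2 : ℝ) • (1 : Matrix (Fin M) (Fin M) ℝ) + striu (Cᵀ * C))
        = TCWY.Smat C := rfl
    rw [hSm]
    have hΨincl : Ψ = (Matrix.of fun (i : Fin N) (j : Fin M) =>
        if (i:ℕ) = (j:ℕ) then (1:ℝ) else 0) := by
      ext i j
      exact hcols j i j.isLt
    have hCT : Cᵀ * (Matrix.of fun (i : Fin N) (j : Fin M) =>
        if (i:ℕ) = (j:ℕ) then (1:ℝ) else 0)
        = (Matrix.of fun (i : Fin M) (l : Fin M) => C (Fin.castLE hMN.le i) l)ᵀ := by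
      ext l j
      rw [Matrix.mul_apply]
      simp only [Matrix.of_apply, Matrix.transpose_apply]
      have hterm : ∀ p : Fin N, C p l * (if (p:ℕ) = (j:ℕ) then (1:ℝ) else 0)
          = (if (p:ℕ) = (j:ℕ) then (1:ℝ) else 0) * C p l := by
        intro p; ring
      rw [Finset.sum_congr rfl fun p _ => hterm p,
        TCWY.sum_ite_val (j:ℕ) (lt_of_lt_of_le j.isLt hMN.le) (fun p => C p l)]
      rfl
    rw [hfac, hΨincl, hPH, Matrix.sub_mul, Matrix.one_mul, Matrix.mul_assoc, hCT]
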